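/- Let X, Y ⊆ V with X ∩ Y = ∅ and X ↛ Y under c. Let Δ > 0 and let v₀, …, v_l be pairwise distinct vertices with c(v_{i−1}, v_i) ≥ Δ for all i ∈ {1, …, l}. Let c' be obtained from c by setting c'(v_{i−1}, v_i) = c(v_{i−1}, v_i) − Δ and c'(v_i, v_{i−1}) = c(v_i, v_{i−1}) + Δ for i = 1, …, l, and c' = c on all other pairs (augmentation of Δ units along the path). If v₀ ∈ X or v_l ∈ Y, then X ↛ Y under c'. -/

import Mathlib

variable {V : Type*}

/-- `w` is reachable from `v` under capacity `c`: there is a (possibly empty)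
sequence of edges with strictly positive capacity from `v` to `w`. -/
def Reach (c : V → V → ℕ) : V → V → Prop :=
  Relation.ReflTransGen fun a b => 0 < c a b

/-- `X → Y`: some `y ∈ Y` is reachable from some `x ∈ X`. -/
def ReachSet (c : V → V → ℕ) (X Y : Set V) : Prop :=
  ∃ x ∈ X, ∃ y ∈ Y, Reach c x y

/-- Augmenting `Δ` units along a path of pairwise distinct vertices which starts
in `X` or ends in `Y` preserves `X ↛ Y`. -/
theorem stmt2 (c c' : V → V → ℕ) (X Y : Set V)
    (hXY : X ∩ Y = ∅) (hreach : ¬ ReachSet c X Y)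
    (Δ : ℕ) (hΔ : 0 < Δ) (l : ℕ) (v : Fin (l + 1) → V)
    (hinj : Function.Injective v)
    (hcapΔ : ∀ i : Fin l, Δ ≤ c (v i.castSucc) (v i.succ))
    (hfwd : ∀ i : Fin l, c' (v i.castSucc) (v i.succ) = c (v i.castSucc) (v i.succ) - Δ)
    (hbwd : ∀ i : Fin l, c' (v i.succ) (v i.castSucc) = c (v i.succ) (v i.castSucc) + Δ)
    (hother : ∀ a b : V,
      (∀ i : Fin l,
        ¬((a = v i.castSucc ∧ b = v i.succ) ∨ (a = v i.succ ∧ b = v i.castSucc))) →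
      c' a b = c a b)
    (hends : v 0 ∈ X ∨ v (Fin.last l) ∈ Y) :
    ¬ ReachSet c' X Y := by
  rintro ⟨x, hx, y, hy, hr⟩
  -- classify positive edges of `c'`
  have hedge : ∀ a b : V, 0 < c' a b →
      0 < c a b ∨ ∃ i : Fin l, a = v i.succ ∧ b = v i.castSucc := by
    intro a b hpos
    by_cases h : ∀ i : Fin l,
        ¬((a = v i.castSucc ∧ b = v i.succ) ∨ (a = v i.succ ∧ b = v i.castSucc))
    · left; rwa [hother a b h] at hpos
    · push_neg at h
      obtain ⟨i, hi⟩ := h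
      rcases hi with ⟨ha, hb⟩ | ⟨ha, hb⟩
      · left; subst ha; subst hb; exact lt_of_lt_of_le hΔ (hcapΔ i)
      · right; exact ⟨i, ha, hb⟩
  -- reachability along the path under `c`
  have hchain : ∀ (n : ℕ) (i j : Fin (l + 1)), (j : ℕ) = (i : ℕ) + n →
      Reach c (v i) (v j) := by
    intro n
    induction n with
    | zero =>
      intro i j h
      have : i = j := Fin.ext (by omega)
      subst this
      exact Relation.ReflTransGen.refl
    | succ n ih =>
      intro i j h
      have hlt : (i : ℕ) + n < l + 1 := by omega
      have hl : (i : ℕ) + n < l := by omega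
      have h1 : Reach c (v i) (v ⟨(i : ℕ) + n, hlt⟩) := ih i ⟨(i : ℕ) + n, hlt⟩ rfl
      have hk : (⟨(i : ℕ) + n, hl⟩ : Fin l).castSucc = (⟨(i : ℕ) + n, hlt⟩ : Fin (l + 1)) := rfl
      have hj : (⟨(i : ℕ) + n, hl⟩ : Fin l).succ = j := Fin.ext (by simp [Fin.succ]; omega)
      have h2 : 0 < c (v ⟨(i : ℕ) + n, hlt⟩) (v j) := by
        rw [← hk, ← hj]
        exact lt_of_lt_of_le hΔ (hcapΔ _)
      exact h1.tail h2
  rcases hends with h0 | hlast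
  · -- path starts in X
    have key : ∀ b, Reach c' x b → ∃ x' ∈ X, Reach c x' b := by
      intro b hb
      unfold Reach at hb
      induction hb with
      | refl => exact ⟨x, hx, Relation.ReflTransGen.refl⟩
      | tail hab e ih =>
        obtain ⟨x', hx', hr'⟩ := ih
        rcases hedge _ _ e with hpos | ⟨i, ha, hb'⟩
        · exact ⟨x', hx', hr'.tail hpos⟩
        · subst hb'
          exact ⟨v 0, h0, hchain (i.castSucc : ℕ) 0 i.castSucc (by simp)⟩
    obtain ⟨x', hx', hr'⟩ := key y hr
    exact hreach ⟨x', hx', y, hy, hr'⟩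
  · -- path ends in Y
    have key : ∀ a, Reach c' a y → ∃ y' ∈ Y, Reach c a y' := by
      intro a ha
      unfold Reach at ha
      induction ha using Relation.ReflTransGen.head_induction_on with
      | refl => exact ⟨y, hy, Relation.ReflTransGen.refl⟩
      | head e _ ih =>
        obtain ⟨y', hy', hr'⟩ := ih
        rcases hedge _ _ e with hpos | ⟨i, ha', hb'⟩
        · exact ⟨y', hy', hr'.head hpos⟩
        · subst ha'
          exact ⟨v (Fin.last l), hlast,
            hchain (l - (i.succ : ℕ)) i.succ (Fin.last l) (by simp [Fin.last])⟩
    obtain ⟨y', hy', hr'⟩ := key x hr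
    exact hreach ⟨x, hx, y', hy', hr'⟩
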